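/- Euler's series for the perimeter of an ellipse: let a, b > 0, set c = √(a² + b²) and n = (a² − b²)/(a² + b²). Then ∫₀^{π/2} √(a²·sin² φ + b²·cos² φ) dφ = (π·c/(2·√2)) · (1 − Σ_{k=1}^{∞} c_k · n^{2k}), where (c_k) are Euler's perimeter-series coefficients, and the series Σ_{k=1}^{∞} c_k · n^{2k} converges. -/

import Mathlib

/-- Euler's perimeter-series coefficients: `c₁ = 1/16` and
`c_{k+1} = c_k · ((4k−1)·(4k+1))/((4·(k+1))²)`. (The value at `0` is irrelevant.) -/
noncomputable def eulerCoeff : ℕ → ℝ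
  | 0 => 0
  | 1 => 1 / 16
  | (k + 2) =>
      eulerCoeff (k + 1) *
        ((4 * ((k : ℝ) + 1) - 1) * (4 * ((k : ℝ) + 1) + 1)) / (4 * ((k : ℝ) + 2)) ^ 2

open Set intervalIntegral Real MeasureTheory

noncomputable def sqrtCoeff : ℕ → ℝ
  | 0 => 1
  | k + 1 => sqrtCoeff k * (2 * (k : ℝ) - 1) / (2 * ((k : ℝ) + 1))

lemma sqrtCoeff_abs_le_one (k : ℕ) : |sqrtCoeff k| ≤ 1 := by
  induction k with
  | zero => simp [sqrtCoeff]
  | succ k ih =>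
    have hk : (0:ℝ) ≤ (k:ℝ) := Nat.cast_nonneg k
    have h1 : |2 * (k : ℝ) - 1| ≤ 2 * ((k:ℝ) + 1) := by
      rw [abs_le]; constructor <;> nlinarith
    have h2 : (0:ℝ) < 2 * ((k:ℝ) + 1) := by positivity
    rw [sqrtCoeff, abs_div, abs_mul, abs_of_pos h2, div_le_one h2]
    calc |sqrtCoeff k| * |2 * (k:ℝ) - 1| ≤ 1 * (2 * ((k:ℝ)+1)) := by
          apply mul_le_mul ih h1 (abs_nonneg _) zero_le_one
      _ = 2 * ((k:ℝ)+1) := one_mul _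

lemma sqrtCoeff_rec (k : ℕ) :
    2 * ((k : ℝ) + 1) * sqrtCoeff (k + 1) = (2 * (k : ℝ) - 1) * sqrtCoeff k := by
  have h2 : (2 * ((k:ℝ) + 1)) ≠ 0 := by positivity
  rw [sqrtCoeff]; field_simp

lemma HasSum.congr' {f g : ℕ → ℝ} {a : ℝ} (h : HasSum f a) (he : ∀ k, f k = g k) :
    HasSum g a := (funext he : f = g) ▸ h


noncomputable def gfun (y : ℝ) : ℝ := ∑' k, sqrtCoeff k * y ^ k

lemma summable_aux {r : ℝ} (hr0 : 0 ≤ r) (hr : r < 1) :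
    Summable (fun k : ℕ => (k : ℝ) * r ^ (k - 1)) := by
  rw [← summable_nat_add_iff 1]
  have h1 : Summable (fun k : ℕ => (k : ℝ) * r ^ k) := by
    simpa using summable_pow_mul_geometric_of_norm_lt_one 1 (r := r)
      (by rwa [Real.norm_eq_abs, abs_of_nonneg hr0])
  have h2 : Summable (fun k : ℕ => r ^ k) := summable_geometric_of_lt_one hr0 hr
  have := h1.add h2
  apply this.congr
  intro k
  push_cast
  ring

lemma summable_gfun {y : ℝ} (hy : |y| < 1) : Summable (fun k => sqrtCoeff k * y ^ k) := by
  apply Summable.of_norm_bounded (g := fun k => |y| ^ k)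
    (summable_geometric_of_lt_one (abs_nonneg y) hy)
  intro k
  rw [norm_mul, norm_pow]
  calc ‖sqrtCoeff k‖ * ‖y‖ ^ k ≤ 1 * ‖y‖ ^ k := by
        apply mul_le_mul_of_nonneg_right (sqrtCoeff_abs_le_one k) (by positivity)
    _ = |y| ^ k := by rw [one_mul]; rfl

lemma deriv_term_bound {r : ℝ} (k : ℕ) {z : ℝ} (hz : |z| ≤ r) :
    ‖sqrtCoeff k * ((k : ℝ) * z ^ (k - 1))‖ ≤ (k : ℝ) * r ^ (k - 1) := by
  have hr0 : 0 ≤ r := le_trans (abs_nonneg z) hz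
  rw [norm_mul, norm_mul, norm_pow, Real.norm_eq_abs, Real.norm_eq_abs, Real.norm_eq_abs,
    Nat.abs_cast]
  calc |sqrtCoeff k| * ((k:ℝ) * |z| ^ (k-1)) ≤ 1 * ((k:ℝ) * r ^ (k-1)) := by
        apply mul_le_mul (sqrtCoeff_abs_le_one k)
        · exact mul_le_mul_of_nonneg_left (pow_le_pow_left₀ (abs_nonneg z) hz _) (Nat.cast_nonneg k)
        · positivity
        · exact zero_le_one
    _ = (k:ℝ) * r ^ (k-1) := one_mul _

lemma summable_deriv_gfun {y : ℝ} (hy : |y| < 1) :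
    Summable (fun k => sqrtCoeff k * ((k : ℝ) * y ^ (k - 1))) :=
  Summable.of_norm_bounded (summable_aux (abs_nonneg y) hy)
    (fun k => deriv_term_bound k le_rfl)

lemma hasDerivAt_gfun {y : ℝ} (hy : |y| < 1) :
    HasDerivAt gfun (∑' k, sqrtCoeff k * ((k : ℝ) * y ^ (k - 1))) y := by
  set r : ℝ := (1 + |y|) / 2 with hr
  have hr0 : 0 ≤ r := by positivity
  have hyr : |y| < r := by rw [hr]; linarith
  have hr1 : r < 1 := by rw [hr]; linarith
  apply hasDerivAt_tsum_of_isPreconnected (u := fun k : ℕ => (k : ℝ) * r ^ (k - 1))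
    (summable_aux hr0 hr1) (Metric.isOpen_ball (x := (0:ℝ)) (ε := r))
    ((convex_ball (0:ℝ) r).isPreconnected)
    (g' := fun k z => sqrtCoeff k * ((k : ℝ) * z ^ (k - 1)))
    (fun k z _ => (hasDerivAt_pow k z).const_mul (sqrtCoeff k))
    (fun k z hz => deriv_term_bound k (le_of_lt (by simpa [Real.dist_eq] using hz)))
    (y₀ := y) (by simpa [Real.dist_eq] using hyr) (summable_gfun hy)
    (by simpa [Real.dist_eq] using hyr)

lemma gfun_ode {y : ℝ} (hy : |y| < 1) :
    2 * (1 - y) * (∑' k, sqrtCoeff k * ((k : ℝ) * y ^ (k - 1))) = -(gfun y) := by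
  set B := ∑' k, sqrtCoeff k * ((k : ℝ) * y ^ (k - 1)) with hB
  have hA : HasSum (fun k => sqrtCoeff k * y ^ k) (gfun y) := (summable_gfun hy).hasSum
  have hBsum : HasSum (fun k => sqrtCoeff k * ((k : ℝ) * y ^ (k - 1))) B :=
    (summable_deriv_gfun hy).hasSum
  -- shifted version
  have hB' : HasSum (fun k => sqrtCoeff (k+1) * (((k:ℝ)+1) * y ^ k)) B := by
    have h2 := (hasSum_nat_add_iff (f := fun k => sqrtCoeff k * ((k : ℝ) * y ^ (k - 1)))
      (g := B) 1).mpr (by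
        rw [Finset.sum_range_one]
        simpa using hBsum)
    apply h2.congr'
    intro k
    push_cast
    norm_num
  -- 2B = ∑ (2k-1) a_k y^k
  have h2B : HasSum (fun k : ℕ => (2*(k:ℝ) - 1) * sqrtCoeff k * y ^ k) (2 * B) := by
    apply (hB'.mul_left 2).congr'
    intro k
    have hrec := sqrtCoeff_rec k
    calc 2 * (sqrtCoeff (k+1) * (((k:ℝ)+1) * y ^ k))
        = (2 * ((k:ℝ)+1) * sqrtCoeff (k+1)) * y ^ k := by ring
      _ = (2*(k:ℝ)-1) * sqrtCoeff k * y ^ k := by rw [hrec]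
  -- yB = ∑ k a_k y^k
  have hyB : HasSum (fun k : ℕ => (k:ℝ) * sqrtCoeff k * y ^ k) (y * B) := by
    have h1 : HasSum (fun k : ℕ => (((k:ℝ)+1) * sqrtCoeff (k+1) * y ^ (k+1))) (y * B) := by
      apply (hB'.mul_left y).congr'
      intro k; ring
    have := (hasSum_nat_add_iff (f := fun k : ℕ => (k:ℝ) * sqrtCoeff k * y ^ k)
      (g := y * B) 1).mp
      (h1.congr' (fun k => by push_cast; ring))
    simpa using this
  have hcomb : HasSum (fun k => -(sqrtCoeff k * y ^ k)) (2*B - 2*(y*B)) := by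
    apply (h2B.sub (hyB.mul_left 2)).congr'
    intro k; ring
  have := hcomb.unique (hA.neg)
  linarith [this]

lemma gfun_zero : gfun 0 = 1 := by
  rw [gfun]
  rw [tsum_eq_single 0]
  · simp [sqrtCoeff]
  · intro k hk
    cases k with
    | zero => exact absurd rfl hk
    | succ m => simp

lemma gfun_sq {y : ℝ} (hy : y ∈ Ioo (-1:ℝ) 1) : gfun y ^ 2 = 1 - y := by
  obtain ⟨hy1, hy2⟩ := hy
  have habs : ∀ z ∈ Ioo (-1:ℝ) 1, |z| < 1 := fun z hz => abs_lt.mpr ⟨hz.1, hz.2⟩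
  set h : ℝ → ℝ := fun z => gfun z ^ 2 / (1 - z) with hh
  have hderiv : ∀ z ∈ Ioo (-1:ℝ) 1, HasDerivAt h 0 z := by
    intro z hz
    have hz1 : (1 : ℝ) - z ≠ 0 := by have := hz.2; intro hc; linarith [sub_eq_zero.mp hc]
    have hg := hasDerivAt_gfun (habs z hz)
    set B := ∑' k, sqrtCoeff k * ((k : ℝ) * z ^ (k - 1)) with hBdef
    have hode := gfun_ode (habs z hz)
    have hgsq : HasDerivAt (fun w => gfun w ^ 2) (2 * gfun z * B) z := by
      have := hg.pow 2
      exact this.congr_deriv (by norm_num [mul_comm, mul_assoc, mul_left_comm])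
    have hden : HasDerivAt (fun w : ℝ => 1 - w) (-1 : ℝ) z := by
      simpa using (hasDerivAt_id z).const_sub 1
    have hdiv := hgsq.div hden hz1
    refine HasDerivAt.congr_deriv hdiv ?_
    rw [div_eq_zero_iff]
    left
    rw [← hBdef] at hode
    linear_combination gfun z * hode
  have hconst : ∀ y ∈ Ioo (-1:ℝ) 1, h y = h 0 := by
    intro y hy
    rcases le_or_gt 0 y with h0 | h0
    · have : ∀ x ∈ Icc (0:ℝ) y, h x = h 0 := by
        apply constant_of_has_deriv_right_zero
        · intro x hx
          have hx' : x ∈ Ioo (-1:ℝ) 1 := ⟨by linarith [hx.1], lt_of_le_of_lt hx.2 hy.2⟩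
          exact (hderiv x hx').continuousAt.continuousWithinAt
        · intro x hx
          have hx' : x ∈ Ioo (-1:ℝ) 1 := ⟨by linarith [hx.1], lt_of_le_of_lt hx.2.le hy.2⟩
          exact (hderiv x hx').hasDerivWithinAt
      exact this y ⟨h0, le_refl y⟩
    · have : ∀ x ∈ Icc y 0, h x = h y := by
        apply constant_of_has_deriv_right_zero
        · intro x hx
          have hx' : x ∈ Ioo (-1:ℝ) 1 := ⟨lt_of_lt_of_le hy.1 hx.1, by linarith [hx.2]⟩
          exact (hderiv x hx').continuousAt.continuousWithinAt
        · intro x hx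
          have hx' : x ∈ Ioo (-1:ℝ) 1 := ⟨lt_of_lt_of_le hy.1 hx.1, by linarith [hx.2.le]⟩
          exact (hderiv x hx').hasDerivWithinAt
      exact (this 0 ⟨h0.le, le_refl 0⟩).symm
  have h0val : h 0 = 1 := by rw [hh]; simp [gfun_zero]
  have := hconst y ⟨hy1, hy2⟩
  rw [h0val, hh] at this
  have hne : (1:ℝ) - y ≠ 0 := by intro hc; linarith [sub_eq_zero.mp hc]
  field_simp [hne] at this
  linarith [this]

lemma gfun_pos {y : ℝ} (hy : y ∈ Ioo (-1:ℝ) 1) : 0 < gfun y := by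
  by_contra hneg
  push_neg at hneg
  have hsq := gfun_sq hy
  have hne : gfun y ≠ 0 := by
    intro h0; rw [h0] at hsq; norm_num at hsq; linarith [hy.2]
  have hlt : gfun y < 0 := lt_of_le_of_ne hneg hne
  -- continuity on uIcc 0 y
  have hsub : uIcc (0:ℝ) y ⊆ Ioo (-1:ℝ) 1 := by
    rw [Set.uIcc_eq_union]
    rintro x (hx | hx)
    · exact ⟨by nlinarith [hx.1, hy.1], lt_of_le_of_lt hx.2 hy.2⟩
    · exact ⟨lt_of_lt_of_le hy.1 hx.1, by nlinarith [hx.2, hy.2]⟩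
  have hcont : ContinuousOn gfun (uIcc 0 y) := fun x hx =>
    ((hasDerivAt_gfun (abs_lt.mpr ⟨(hsub hx).1, (hsub hx).2⟩)).continuousAt).continuousWithinAt
  have hiv := intermediate_value_uIcc hcont
  have h0mem : (0:ℝ) ∈ uIcc (gfun 0) (gfun y) := by
    rw [gfun_zero]
    rw [Set.mem_uIcc]
    right; exact ⟨hlt.le, zero_le_one⟩
  obtain ⟨z, hz, hz0⟩ := hiv h0mem
  have hsq2 := gfun_sq (hsub hz)
  rw [hz0] at hsq2
  have h2 := (hsub hz).2
  nlinarith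

lemma hasSum_sqrt_one_sub {y : ℝ} (hy : |y| < 1) :
    HasSum (fun k => sqrtCoeff k * y ^ k) (Real.sqrt (1 - y)) := by
  have hmem : y ∈ Ioo (-1:ℝ) 1 := ⟨(abs_lt.mp hy).1, (abs_lt.mp hy).2⟩
  have : Real.sqrt (1 - y) = gfun y := by
    rw [← gfun_sq hmem, Real.sqrt_sq (gfun_pos hmem).le]
  rw [this]
  exact (summable_gfun hy).hasSum

noncomputable def wprod (m : ℕ) : ℝ := ∏ i ∈ Finset.range m, (2 * (i:ℝ) + 1) / (2 * i + 2)

lemma coeff_identity (k : ℕ) :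
    sqrtCoeff (2 * (k + 1)) * wprod (k + 1) = -eulerCoeff (k + 1) := by
  induction k with
  | zero =>
    show sqrtCoeff 2 * wprod 1 = -eulerCoeff 1
    norm_num [sqrtCoeff, wprod, eulerCoeff, Finset.prod_range_one]
  | succ k ih =>
    have h1 : 2 * (k + 2) = (2 * (k + 1) + 1) + 1 := by ring
    rw [h1, sqrtCoeff, sqrtCoeff]
    have h2 : wprod (k + 2) = wprod (k + 1) * ((2 * ((k:ℝ)+1) + 1) / (2 * ((k:ℝ)+1) + 2)) := by
      rw [wprod, wprod, Finset.prod_range_succ]; push_cast; ring_nf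
    have h3 : eulerCoeff (k + 2) = eulerCoeff (k + 1) *
        ((4 * ((k : ℝ) + 1) - 1) * (4 * ((k : ℝ) + 1) + 1)) / (4 * ((k : ℝ) + 2)) ^ 2 := rfl
    rw [h2, h3]
    push_cast
    have hk0 : (0:ℝ) ≤ (k:ℝ) := Nat.cast_nonneg k
    field_simp
    linear_combination ((2 * (2 * ((k:ℝ) + 1)) - 1) * (2 * (2 * ((k:ℝ) + 1) + 1) - 1) *
      (2 * ((k:ℝ) + 1) + 1) * (4 * ((k:ℝ) + 2)) ^ 2 -
      (512*(k:ℝ)^5+3584*(k:ℝ)^4+9696*(k:ℝ)^3+12640*(k:ℝ)^2+7936*(k:ℝ)+1920)) * ih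

lemma integral_cos_pow_halfpi (n : ℕ) :
    ∫ x in (0:ℝ)..(π/2), Real.cos x ^ n = ∫ x in (0:ℝ)..(π/2), Real.sin x ^ n := by
  have h := integral_comp_sub_left (a := (0:ℝ)) (b := π/2) (fun x => Real.cos x ^ n) (π/2)
  norm_num [Real.cos_pi_div_two_sub] at h
  rw [← h]

lemma integral_cos_pow_pi_even (m : ℕ) :
    ∫ x in (0:ℝ)..π, Real.cos x ^ (2*m) = π * ∏ i ∈ Finset.range m, (2*(i:ℝ)+1)/(2*i+2) := by
  have hint : ∀ (u v : ℝ), IntervalIntegrable (fun x => Real.cos x ^ (2*m)) MeasureTheory.volume u v :=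
    fun u v => (Real.continuous_cos.pow _).intervalIntegrable u v
  have hsplit : ∫ x in (0:ℝ)..π, Real.cos x ^ (2*m)
      = (∫ x in (0:ℝ)..(π/2), Real.cos x ^ (2*m)) + ∫ x in (π/2)..π, Real.cos x ^ (2*m) :=
    (integral_add_adjacent_intervals (hint 0 (π/2)) (hint (π/2) π)).symm
  have hrefl : ∫ x in (π/2)..π, Real.cos x ^ (2*m) = ∫ x in (0:ℝ)..(π/2), Real.cos x ^ (2*m) := by
    have h := integral_comp_sub_left (a := (0:ℝ)) (b := π/2) (fun x => Real.cos x ^ (2*m)) π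
    norm_num [Real.cos_pi_sub, Even.neg_pow (even_two_mul m)] at h
    rw [show π - π/2 = π/2 by ring] at h
    exact h.symm
  have hsin : ∫ x in (0:ℝ)..π, Real.sin x ^ (2*m)
      = (∫ x in (0:ℝ)..(π/2), Real.sin x ^ (2*m)) + ∫ x in (π/2)..π, Real.sin x ^ (2*m) :=
    (integral_add_adjacent_intervals ((Real.continuous_sin.pow _).intervalIntegrable _ _)
      ((Real.continuous_sin.pow _).intervalIntegrable _ _)).symm
  have hsinrefl : ∫ x in (π/2)..π, Real.sin x ^ (2*m) = ∫ x in (0:ℝ)..(π/2), Real.sin x ^ (2*m) := by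
    have h := integral_comp_sub_left (a := (0:ℝ)) (b := π/2) (fun x => Real.sin x ^ (2*m)) π
    norm_num [Real.sin_pi_sub] at h
    rw [show π - π/2 = π/2 by ring] at h
    exact h.symm
  calc ∫ x in (0:ℝ)..π, Real.cos x ^ (2*m)
      = (∫ x in (0:ℝ)..(π/2), Real.cos x ^ (2*m)) + ∫ x in (π/2)..π, Real.cos x ^ (2*m) := hsplit
    _ = 2 * ∫ x in (0:ℝ)..(π/2), Real.sin x ^ (2*m) := by
        rw [hrefl, integral_cos_pow_halfpi]; ring
    _ = (∫ x in (0:ℝ)..(π/2), Real.sin x ^ (2*m)) + ∫ x in (π/2)..π, Real.sin x ^ (2*m) := by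
        rw [hsinrefl]; ring
    _ = ∫ x in (0:ℝ)..π, Real.sin x ^ (2*m) := hsin.symm
    _ = π * ∏ i ∈ Finset.range m, (2*(i:ℝ)+1)/(2*i+2) := integral_sin_pow_even m

lemma integral_cos_pow_pi_odd (m : ℕ) :
    ∫ x in (0:ℝ)..π, Real.cos x ^ (2*m+1) = 0 := by
  have h := integral_comp_sub_left (a := (0:ℝ)) (b := π) (fun x => Real.cos x ^ (2*m+1)) π
  norm_num [Real.cos_pi_sub, Odd.neg_pow (odd_two_mul_add_one m),
    intervalIntegral.integral_neg] at h
  linarith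

lemma integral_cos_two_mul_pow (k : ℕ) :
    ∫ φ in (0:ℝ)..(π/2), Real.cos (2*φ) ^ k = (1/2) * ∫ x in (0:ℝ)..π, Real.cos x ^ k := by
  have h := integral_comp_mul_left (a := (0:ℝ)) (b := π/2) (fun x => Real.cos x ^ k)
    (c := 2) two_ne_zero
  rw [h, show (2:ℝ) * (π/2) = π by ring, show (2:ℝ) * 0 = 0 by ring]
  norm_num

lemma HasSum.congr2 {f g : ℕ → ℝ} {a : ℝ} (h : HasSum f a) (he : ∀ k, f k = g k) :
    HasSum g a := (funext he : f = g) ▸ h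


/-- E563 §4: Euler's series for the quarter-perimeter of the ellipse with semiaxes
`a, b > 0`: with `c = √(a²+b²)` and `n = (a²−b²)/(a²+b²)`,
`∫₀^{π/2} √(a²sin²φ + b²cos²φ) dφ = (πc/(2√2))·(1 − Σ_{k≥1} c_k n^{2k})`,
the series being convergent. -/
theorem euler_perimeter_series (a b : ℝ) (ha : 0 < a) (hb : 0 < b)
    (c n : ℝ) (hc : c = Real.sqrt (a ^ 2 + b ^ 2))
    (hn : n = (a ^ 2 - b ^ 2) / (a ^ 2 + b ^ 2)) :
    (Summable fun k : ℕ => eulerCoeff (k + 1) * n ^ (2 * (k + 1))) ∧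
    ∫ φ in (0 : ℝ)..(Real.pi / 2),
        Real.sqrt (a ^ 2 * Real.sin φ ^ 2 + b ^ 2 * Real.cos φ ^ 2)
      = (Real.pi * c / (2 * Real.sqrt 2)) *
          (1 - ∑' k : ℕ, eulerCoeff (k + 1) * n ^ (2 * (k + 1))) := by
  have hab : (0:ℝ) < a ^ 2 + b ^ 2 := by positivity
  have hn1 : |n| < 1 := by
    rw [hn, abs_div, abs_of_pos hab, div_lt_one hab, abs_lt]
    constructor <;> nlinarith
  have hpi : (0:ℝ) < π := Real.pi_pos
  -- pointwise form of the integrand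
  have hpt : ∀ φ : ℝ, Real.sqrt (a ^ 2 * Real.sin φ ^ 2 + b ^ 2 * Real.cos φ ^ 2)
      = (c / Real.sqrt 2) * Real.sqrt (1 - n * Real.cos (2 * φ)) := by
    intro φ
    have h1 : c / Real.sqrt 2 = Real.sqrt ((a ^ 2 + b ^ 2) / 2) := by
      rw [hc, Real.sqrt_div hab.le]
    rw [h1, ← Real.sqrt_mul (by positivity)]
    congr 1
    rw [hn, Real.cos_two_mul, Real.sin_sq]
    field_simp
    ring
  -- the pointwise series
  set F : ℕ → ℝ → ℝ := fun k φ => sqrtCoeff k * n ^ k * Real.cos (2 * φ) ^ k with hF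
  have hps : ∀ φ : ℝ, HasSum (fun k => F k φ) (Real.sqrt (1 - n * Real.cos (2 * φ))) := by
    intro φ
    have habs : |n * Real.cos (2 * φ)| < 1 := by
      rw [abs_mul]
      calc |n| * |Real.cos (2*φ)| ≤ |n| * 1 :=
            mul_le_mul_of_nonneg_left (Real.abs_cos_le_one _) (abs_nonneg n)
        _ = |n| := mul_one _
        _ < 1 := hn1
    exact (hasSum_sqrt_one_sub habs).congr2 (fun k => by rw [mul_pow]; ring)
  set μ : Measure ℝ := volume.restrict (Ioc 0 (π/2)) with hμ
  have hFc : ∀ k, Continuous (F k) := by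
    intro k
    exact (continuous_const.mul ((Real.continuous_cos.comp
      (continuous_const.mul continuous_id)).pow k))
  have hFint : ∀ k, Integrable (F k) μ := fun k => ((hFc k).integrableOn_Ioc)
  have hμtop : μ (Ioc 0 (π/2)) ≠ ⊤ := by
    rw [hμ, Measure.restrict_apply measurableSet_Ioc, inter_self, Real.volume_Ioc]
    exact ENNReal.ofReal_ne_top
  have hFbound : ∀ k, ∀ φ, ‖F k φ‖ ≤ |n| ^ k := by
    intro k φ
    rw [hF]
    simp only [norm_mul, norm_pow, Real.norm_eq_abs]
    calc |sqrtCoeff k| * |n| ^ k * |Real.cos (2*φ)| ^ k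
        ≤ 1 * |n| ^ k * 1 ^ k := by
          apply mul_le_mul
          · exact mul_le_mul_of_nonneg_right (sqrtCoeff_abs_le_one k) (by positivity)
          · exact pow_le_pow_left₀ (abs_nonneg _) (Real.abs_cos_le_one _) k
          · positivity
          · positivity
      _ = |n| ^ k := by ring
  have hFnorm : Summable fun k => ∫ φ, ‖F k φ‖ ∂μ := by
    have hnn : ∀ k, 0 ≤ ∫ φ, ‖F k φ‖ ∂μ := fun k => integral_nonneg (fun φ => norm_nonneg _)
    have hle : ∀ k, (∫ φ, ‖F k φ‖ ∂μ) ≤ |n| ^ k * (π/2) := by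
      intro k
      rw [← Real.norm_of_nonneg (hnn k)]
      have hmain := norm_setIntegral_le_of_norm_le_const_ae' (μ := volume)
        (s := Ioc (0:ℝ) (π/2)) (C := |n| ^ k) (f := fun φ => ‖F k φ‖)
        (by rw [Real.volume_Ioc]; exact ENNReal.ofReal_lt_top)
        (Filter.Eventually.of_forall (fun x _ => by
          rw [Real.norm_of_nonneg (norm_nonneg _)]; exact hFbound k x))
      calc ‖∫ φ, ‖F k φ‖ ∂μ‖ ≤ |n| ^ k * (volume (Ioc (0:ℝ) (π/2))).toReal := hmain
        _ = |n| ^ k * (π/2) := by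
            rw [Real.volume_Ioc, ENNReal.toReal_ofReal (by linarith)]
            ring
    exact Summable.of_nonneg_of_le hnn hle
      ((summable_geometric_of_lt_one (abs_nonneg n) hn1).mul_right _)
  have hkey : HasSum (fun k => ∫ φ, F k φ ∂μ) (∫ φ, (∑' k, F k φ) ∂μ) :=
    hasSum_integral_of_summable_integral_norm hFint hFnorm
  -- identify the total integral
  set S : ℝ := ∫ φ in (0:ℝ)..(π/2), Real.sqrt (1 - n * Real.cos (2 * φ)) with hS
  have hSint : (∫ φ, (∑' k, F k φ) ∂μ) = S := by
    rw [hS, intervalIntegral.integral_of_le (by positivity)]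
    apply MeasureTheory.integral_congr_ae
    filter_upwards with φ
    exact (hps φ).tsum_eq
  -- identify each term
  have hterm : ∀ k, (∫ φ, F k φ ∂μ)
      = sqrtCoeff k * n ^ k * ((1/2) * ∫ x in (0:ℝ)..π, Real.cos x ^ k) := by
    intro k
    rw [← integral_cos_two_mul_pow k, intervalIntegral.integral_of_le
      (le_of_lt (by positivity : (0:ℝ) < π/2)), ← MeasureTheory.integral_const_mul]
  rw [hSint] at hkey
  have hkey2 : HasSum
      (fun k => sqrtCoeff k * n ^ k * ((1/2) * ∫ x in (0:ℝ)..π, Real.cos x ^ k)) S :=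
    hkey.congr2 hterm
  -- restrict to even indices
  set T : ℕ → ℝ := fun k => sqrtCoeff k * n ^ k * ((1/2) * ∫ x in (0:ℝ)..π, Real.cos x ^ k)
    with hT
  have hodd : ∀ x ∉ Set.range (fun m : ℕ => 2 * m), T x = 0 := by
    intro x hx
    have hodd' : ∃ m, x = 2 * m + 1 := by
      rcases Nat.even_or_odd x with ⟨m, hm⟩ | ⟨m, hm⟩
      · exact absurd ⟨m, show 2 * m = x by omega⟩ hx
      · exact ⟨m, by omega⟩
    obtain ⟨m, rfl⟩ := hodd'
    rw [hT]
    simp [integral_cos_pow_pi_odd m]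
  have heven : HasSum (fun m => T (2 * m)) S := by
    have hinj : Function.Injective (fun m : ℕ => 2 * m) := fun x y h => by simpa using h
    exact (hinj.hasSum_iff hodd).mpr hkey2
  have hTeven : ∀ m, T (2 * m) = sqrtCoeff (2*m) * wprod m * (π/2) * n ^ (2*m) := by
    intro m
    rw [hT]
    simp only
    rw [integral_cos_pow_pi_even m, ← wprod]
    ring
  have hT0 : T 0 = π / 2 := by
    rw [hTeven 0]
    norm_num [sqrtCoeff, wprod]
  -- strip the first term
  have hstrip : HasSum (fun m => T (2 * (m + 1))) (S - π/2) := by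
    have := (hasSum_nat_add_iff (f := fun m => T (2 * m)) (g := S - π/2) 1).mpr ?_
    · exact this.congr2 (fun m => by norm_num [mul_add])
    · rw [Finset.sum_range_one, hT0]
      rw [sub_add_cancel]
      exact heven
  have hstrip2 : HasSum (fun m => -((π/2) * (eulerCoeff (m+1) * n ^ (2 * (m+1))))) (S - π/2) := by
    apply hstrip.congr2
    intro m
    rw [hTeven (m+1), coeff_identity m]
    ring
  have hπ0 : π ≠ 0 := ne_of_gt hpi
  have hfin : HasSum (fun m => eulerCoeff (m+1) * n ^ (2 * (m+1))) ((2/π) * -(S - π/2)) := by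
    apply ((hstrip2.neg).mul_left (2/π)).congr2
    intro m
    field_simp
  constructor
  · exact hfin.summable
  · have htsum : ∑' k : ℕ, eulerCoeff (k + 1) * n ^ (2 * (k + 1)) = (2/π) * -(S - π/2) :=
      hfin.tsum_eq
    have hint : ∫ φ in (0:ℝ)..(π/2),
        Real.sqrt (a ^ 2 * Real.sin φ ^ 2 + b ^ 2 * Real.cos φ ^ 2)
        = (c / Real.sqrt 2) * S := by
      rw [hS, ← intervalIntegral.integral_const_mul]
      apply intervalIntegral.integral_congr
      intro φ _
      exact hpt φ
    rw [hint, htsum]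
    have h2 : Real.sqrt 2 ≠ 0 := by positivity
    field_simp
    ring
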